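/- The functions x ↦ log Φ(x) and x ↦ log(1 - Φ(x)) are strictly concave on ℝ, where Φ is the standard normal cumulative distribution function. -/

import Mathlib

noncomputable def Phi (x : ℝ) : ℝ :=
  ∫ t in Set.Iic x, (Real.sqrt (2 * Real.pi))⁻¹ * Real.exp (-t ^ 2 / 2)

open MeasureTheory Set Real Filter

noncomputable def phi' (x : ℝ) : ℝ := (Real.sqrt (2 * Real.pi))⁻¹ * Real.exp (-x ^ 2 / 2)

lemma phi'_pos (x : ℝ) : 0 < phi' x := by
  have h : 0 < Real.sqrt (2 * Real.pi) := Real.sqrt_pos.2 (by positivity)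
  exact mul_pos (inv_pos.2 h) (Real.exp_pos _)

lemma phi'_eq : phi' = fun x => (Real.sqrt (2 * Real.pi))⁻¹ * Real.exp (-(1/2 : ℝ) * x ^ 2) := by
  funext x; unfold phi'; congr 1; ring

lemma integrable_phi' : Integrable phi' := by
  rw [phi'_eq]
  exact (integrable_exp_neg_mul_sq (by norm_num : (0:ℝ) < 1/2)).const_mul _

lemma continuous_phi' : Continuous phi' := by
  apply Continuous.mul continuous_const
  exact (Continuous.div_const (continuous_pow 2).neg 2).rexp

lemma integral_phi' : ∫ x, phi' x = 1 := by
  rw [phi'_eq]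
  rw [MeasureTheory.integral_const_mul, integral_gaussian]
  rw [div_div_eq_mul_div, div_one]
  rw [mul_comm Real.pi 2]
  exact inv_mul_cancel₀ (ne_of_gt (Real.sqrt_pos.2 (by positivity)))

lemma hasDerivAt_phi' (x : ℝ) : HasDerivAt phi' (-x * phi' x) x := by
  have h1 : HasDerivAt (fun t : ℝ => -t ^ 2 / 2) (-x) x := by
    have h := ((hasDerivAt_pow 2 x).neg).div_const 2
    refine h.congr_deriv ?_
    simp; ring
  have h2 := (h1.exp).const_mul (Real.sqrt (2 * Real.pi))⁻¹
  show HasDerivAt (fun t => (Real.sqrt (2 * Real.pi))⁻¹ * Real.exp (-t ^ 2 / 2)) _ x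
  refine h2.congr_deriv ?_
  unfold phi'
  ring

lemma tendsto_phi'_atBot : Tendsto phi' atBot (nhds 0) := by
  have hsq : Tendsto (fun t : ℝ => t ^ 2) atBot atTop := by
    have hp : Tendsto (fun x : ℝ => x ^ 2) atTop atTop :=
      tendsto_pow_atTop (two_ne_zero)
    have h := hp.comp (tendsto_neg_atBot_atTop (G := ℝ))
    exact h.congr fun t => by simp [Function.comp]
  have h1 : Tendsto (fun t : ℝ => -t ^ 2 / 2) atBot atBot :=
    Tendsto.atBot_div_const (by norm_num : (0:ℝ) < 2)
      (tendsto_neg_atTop_atBot.comp hsq)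
  have h2 := Real.tendsto_exp_atBot.comp h1
  have h3 := h2.const_mul (Real.sqrt (2 * Real.pi))⁻¹
  rw [mul_zero] at h3
  exact h3

lemma integrable_mul_phi' : Integrable (fun t : ℝ => -t * phi' t) := by
  have h := (integrable_mul_exp_neg_mul_sq (by norm_num : (0:ℝ) < 1/2)).const_mul
    (-(Real.sqrt (2 * Real.pi))⁻¹)
  apply h.congr
  refine Eventually.of_forall fun t => ?_
  have hexp : Real.exp (-(1/2 : ℝ) * t ^ 2) = Real.exp (-t ^ 2 / 2) := by congr 1; ring
  simp only [phi', hexp]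
  ring

lemma Phi_eq (x : ℝ) : Phi x = ∫ t in Set.Iic x, phi' t := rfl

lemma pos_of_setIntegral {s : Set ℝ} (hs : MeasurableSet s) (hvol : volume s ≠ 0)
    (g : ℝ → ℝ) (hg : ∀ t, 0 < g t) (hint : IntegrableOn g s) : 0 < ∫ t in s, g t := by
  rw [setIntegral_pos_iff_support_of_nonneg_ae _ hint]
  · have : Function.support g = univ := by
      ext t; simp [Function.support, (hg t).ne']
    rw [this, univ_inter]
    exact pos_iff_ne_zero.2 hvol
  · exact Eventually.of_forall fun t => (hg t).le

lemma Phi_pos (x : ℝ) : 0 < Phi x := by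
  rw [Phi_eq]
  refine pos_of_setIntegral measurableSet_Iic ?_ _ phi'_pos integrable_phi'.integrableOn
  rw [Real.volume_Iic]; simp

lemma one_sub_Phi (x : ℝ) : 1 - Phi x = ∫ t in Set.Ioi x, phi' t := by
  have h := intervalIntegral.integral_Iic_add_Ioi (b := x)
    integrable_phi'.integrableOn integrable_phi'.integrableOn
  rw [integral_phi'] at h
  rw [Phi_eq]
  linarith

lemma Phi_lt_one (x : ℝ) : Phi x < 1 := by
  have h : 0 < 1 - Phi x := by
    rw [one_sub_Phi]
    refine pos_of_setIntegral measurableSet_Ioi ?_ _ phi'_pos integrable_phi'.integrableOn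
    rw [Real.volume_Ioi]; simp
  linarith

lemma one_sub_Phi_eq (x : ℝ) : 1 - Phi x = Phi (-x) := by
  rw [one_sub_Phi, Phi_eq]
  rw [← integral_comp_neg_Ioi]
  congr 1
  funext t
  unfold phi'
  congr 2
  ring

lemma hasDerivAt_Phi (x : ℝ) : HasDerivAt Phi (phi' x) x := by
  have key : ∀ u : ℝ, Phi u = Phi 0 + ∫ t in (0:ℝ)..u, phi' t := by
    intro u
    rw [Phi_eq, Phi_eq,
      ← intervalIntegral.integral_Iic_sub_Iic integrable_phi'.integrableOn
        integrable_phi'.integrableOn]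
    ring
  have h : HasDerivAt (fun u : ℝ => Phi 0 + ∫ t in (0:ℝ)..u, phi' t) (phi' x) x := by
    apply HasDerivAt.const_add
    exact intervalIntegral.integral_hasDerivAt_right
      (integrable_phi'.intervalIntegrable)
      (continuous_phi'.stronglyMeasurableAtFilter _ _)
      continuous_phi'.continuousAt
  exact (funext key : Phi = _) ▸ h

lemma mills_aux (x : ℝ) : ∫ t in Set.Iic x, (-t) * phi' t = phi' x := by
  have h := MeasureTheory.integral_Iic_of_hasDerivAt_of_tendsto
    (f := phi') (f' := fun t => -t * phi' t) (a := x) (m := 0)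
    continuous_phi'.continuousWithinAt
    (fun t _ => hasDerivAt_phi' t)
    integrable_mul_phi'.integrableOn
    tendsto_phi'_atBot
  rw [h, sub_zero]

lemma mills (x : ℝ) : -x * Phi x < phi' x := by
  have hint1 : IntegrableOn (fun t : ℝ => -x * phi' t) (Set.Iic x) :=
    (integrable_phi'.const_mul (-x)).integrableOn
  have hint2 : IntegrableOn (fun t : ℝ => -t * phi' t) (Set.Iic x) :=
    integrable_mul_phi'.integrableOn
  have hpos : 0 < ∫ t in Set.Iic x, ((-t) * phi' t - (-x) * phi' t) := by
    rw [setIntegral_pos_iff_support_of_nonneg_ae]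
    · refine lt_of_lt_of_le ?_ (measure_mono (?_ : Set.Iio x ⊆ _))
      · rw [Real.volume_Iio]; simp
      · intro t ht
        have htx : t < x := Set.mem_Iio.1 ht
        refine ⟨?_, Set.mem_Iic.2 htx.le⟩
        have hgt : (0:ℝ) < (-t) * phi' t - (-x) * phi' t := by
          have := phi'_pos t
          nlinarith
        exact Function.mem_support.2 hgt.ne'
    · filter_upwards [ae_restrict_mem measurableSet_Iic] with t ht
      simp only [Pi.zero_apply]
      have := phi'_pos t
      simp only [Set.mem_Iic] at ht
      nlinarith
    · exact hint2.sub hint1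
  have hsub : ∫ t in Set.Iic x, ((-t) * phi' t - (-x) * phi' t)
      = (∫ t in Set.Iic x, (-t) * phi' t) - ∫ t in Set.Iic x, (-x) * phi' t :=
    integral_sub hint2 hint1
  have hconst : ∫ t in Set.Iic x, (-x) * phi' t = -x * Phi x := by
    rw [MeasureTheory.integral_const_mul, ← Phi_eq]
  rw [hsub, hconst, mills_aux] at hpos
  linarith

lemma phi'_even (x : ℝ) : phi' (-x) = phi' x := by
  unfold phi'; congr 2; ring

lemma mills' (x : ℝ) : x * (1 - Phi x) < phi' x := by
  rw [one_sub_Phi_eq]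
  have h := mills (-x)
  rw [phi'_even] at h
  linarith [h]

theorem stmt11 :
    StrictConcaveOn ℝ Set.univ (fun x : ℝ => Real.log (Phi x)) ∧
    StrictConcaveOn ℝ Set.univ (fun x : ℝ => Real.log (1 - Phi x)) := by
  constructor
  · have hlog : ∀ x : ℝ, HasDerivAt (fun y => Real.log (Phi y)) (phi' x / Phi x) x :=
      fun x => (hasDerivAt_Phi x).log (Phi_pos x).ne'
    have hd1 : deriv (fun y => Real.log (Phi y)) = fun y => phi' y / Phi y :=
      funext fun y => (hlog y).deriv
    apply strictConcaveOn_univ_of_deriv2_neg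
    · exact continuous_iff_continuousAt.2 fun x => (hlog x).continuousAt
    · intro x
      have hd2 : HasDerivAt (fun y => phi' y / Phi y)
          ((-x * phi' x * Phi x - phi' x * phi' x) / (Phi x) ^ 2) x :=
        (hasDerivAt_phi' x).div (hasDerivAt_Phi x) (Phi_pos x).ne'
      have : deriv^[2] (fun y => Real.log (Phi y)) x
          = (-x * phi' x * Phi x - phi' x * phi' x) / (Phi x) ^ 2 := by
        rw [Function.iterate_succ_apply', Function.iterate_one, hd1, hd2.deriv]
      rw [this]
      apply div_neg_of_neg_of_pos
      · have h1 := mills x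
        have h2 := phi'_pos x
        nlinarith
      · exact pow_pos (Phi_pos x) 2
  · have hG : ∀ x : ℝ, 0 < 1 - Phi x := fun x => by linarith [Phi_lt_one x]
    have hdG : ∀ x : ℝ, HasDerivAt (fun y => 1 - Phi y) (-phi' x) x :=
      fun x => (hasDerivAt_Phi x).const_sub 1
    have hlog : ∀ x : ℝ, HasDerivAt (fun y => Real.log (1 - Phi y)) (-phi' x / (1 - Phi x)) x :=
      fun x => (hdG x).log (hG x).ne'
    have hd1 : deriv (fun y => Real.log (1 - Phi y)) = fun y => -phi' y / (1 - Phi y) :=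
      funext fun y => (hlog y).deriv
    apply strictConcaveOn_univ_of_deriv2_neg
    · exact continuous_iff_continuousAt.2 fun x => (hlog x).continuousAt
    · intro x
      have hd2 : HasDerivAt (fun y => -phi' y / (1 - Phi y))
          ((-(-x * phi' x) * (1 - Phi x) - -phi' x * -phi' x) / (1 - Phi x) ^ 2) x :=
        ((hasDerivAt_phi' x).neg).div (hdG x) (hG x).ne'
      have : deriv^[2] (fun y => Real.log (1 - Phi y)) x
          = (-(-x * phi' x) * (1 - Phi x) - -phi' x * -phi' x) / (1 - Phi x) ^ 2 := by
        rw [Function.iterate_succ_apply', Function.iterate_one, hd1, hd2.deriv]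
      rw [this]
      apply div_neg_of_neg_of_pos
      · have h1 := mills' x
        have h2 := phi'_pos x
        have h3 := hG x
        nlinarith
      · exact pow_pos (hG x) 2
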